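/- Let p > 1, q > 1 with 1/p + 1/q = 1, and set A = (2 − 1/p)/3 and B = (1 + 1/p)/3. Define F(x) = 2pq(Ax + B)(x/p + 1/q − x^{1/p}) − (x − 1)^2 for x > 0. Then F(x) ≥ 0 for all x > 0. -/

import Mathlib

noncomputable def hh (t x : ℝ) : ℝ :=
  2*(((2-t)/3)*x + (1+t)/3)*(t*x + (1-t) - x ^ t) - t*(1-t)*(x-1)^2

noncomputable def hh1 (t x : ℝ) : ℝ :=
  2*((2-t)/3)*(t*x + (1-t) - x ^ t)
    + 2*(((2-t)/3)*x + (1+t)/3)*(t - t*x ^ (t-1)) - 2*t*(1-t)*(x-1)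

noncomputable def hh2 (t x : ℝ) : ℝ :=
  4*((2-t)/3)*t*(1 - x ^ (t-1)) + 2*t*(1-t)*(((2-t)/3)*x + (1+t)/3)*x ^ (t-2)
    - 2*t*(1-t)

noncomputable def hh3 (t x : ℝ) : ℝ :=
  2*t*(1-t)*((2-t)*(1+t)/3)*x ^ (t-3)*(x-1)

lemma hd_hh (t : ℝ) {x : ℝ} (hx : 0 < x) : HasDerivAt (hh t) (hh1 t x) x := by
  have hid : HasDerivAt (fun y : ℝ => y) 1 x := hasDerivAt_id' x
  have hr : HasDerivAt (fun y : ℝ => y ^ t) (t * x ^ (t-1)) x :=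
    Real.hasDerivAt_rpow_const (Or.inl hx.ne')
  have hQ : HasDerivAt (fun y : ℝ => t*y + (1-t) - y ^ t) (t - t*x ^ (t-1)) x := by
    have h := ((hid.const_mul t).add_const (1-t)).sub hr
    refine h.congr_deriv ?_
    ring
  have hP : HasDerivAt (fun y : ℝ => 2*(((2-t)/3)*y + (1+t)/3)) (2*((2-t)/3)) x := by
    have h := ((hid.const_mul ((2-t)/3)).add_const ((1+t)/3)).const_mul 2
    refine h.congr_deriv ?_
    ring
  have hR : HasDerivAt (fun y : ℝ => t*(1-t)*(y-1)^2) (t*(1-t)*(2*(x-1))) x := by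
    have h := ((hid.sub_const 1).pow 2).const_mul (t*(1-t))
    refine h.congr_deriv ?_
    norm_num
  have H := (hP.mul hQ).sub hR
  unfold hh hh1
  refine H.congr_deriv ?_
  ring

lemma hd_hh1 (t : ℝ) {x : ℝ} (hx : 0 < x) : HasDerivAt (hh1 t) (hh2 t x) x := by
  have hid : HasDerivAt (fun y : ℝ => y) 1 x := hasDerivAt_id' x
  have hr : HasDerivAt (fun y : ℝ => y ^ t) (t * x ^ (t-1)) x :=
    Real.hasDerivAt_rpow_const (Or.inl hx.ne')
  have hr1 : HasDerivAt (fun y : ℝ => y ^ (t-1)) ((t-1) * x ^ (t-2)) x := by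
    have h : HasDerivAt (fun y : ℝ => y ^ (t-1)) ((t-1) * x ^ (t-1-1)) x :=
      Real.hasDerivAt_rpow_const (Or.inl hx.ne')
    have e : t - 1 - 1 = t - 2 := by ring
    rwa [e] at h
  have hQ : HasDerivAt (fun y : ℝ => t*y + (1-t) - y ^ t) (t - t*x ^ (t-1)) x := by
    have h := ((hid.const_mul t).add_const (1-t)).sub hr
    refine h.congr_deriv ?_
    ring
  have hT1 := hQ.const_mul (2*((2-t)/3))
  have hP : HasDerivAt (fun y : ℝ => 2*(((2-t)/3)*y + (1+t)/3)) (2*((2-t)/3)) x := by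
    have h := ((hid.const_mul ((2-t)/3)).add_const ((1+t)/3)).const_mul 2
    refine h.congr_deriv ?_
    ring
  have hS : HasDerivAt (fun y : ℝ => t - t*y ^ (t-1)) (-(t*((t-1) * x ^ (t-2)))) x :=
    (hr1.const_mul t).const_sub t
  have hT3 := (hid.sub_const 1).const_mul (2*t*(1-t))
  have H := (hT1.add (hP.mul hS)).sub hT3
  unfold hh1 hh2
  refine H.congr_deriv ?_
  ring

lemma hd_hh2 (t : ℝ) {x : ℝ} (hx : 0 < x) : HasDerivAt (hh2 t) (hh3 t x) x := by
  have hid : HasDerivAt (fun y : ℝ => y) 1 x := hasDerivAt_id' x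
  have hr1 : HasDerivAt (fun y : ℝ => y ^ (t-1)) ((t-1) * x ^ (t-2)) x := by
    have h : HasDerivAt (fun y : ℝ => y ^ (t-1)) ((t-1) * x ^ (t-1-1)) x :=
      Real.hasDerivAt_rpow_const (Or.inl hx.ne')
    have e : t - 1 - 1 = t - 2 := by ring
    rwa [e] at h
  have hr2 : HasDerivAt (fun y : ℝ => y ^ (t-2)) ((t-2) * x ^ (t-3)) x := by
    have h : HasDerivAt (fun y : ℝ => y ^ (t-2)) ((t-2) * x ^ (t-2-1)) x :=
      Real.hasDerivAt_rpow_const (Or.inl hx.ne')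
    have e : t - 2 - 1 = t - 3 := by ring
    rwa [e] at h
  have hU1 := (hr1.const_sub 1).const_mul (4*((2-t)/3)*t)
  have hW : HasDerivAt (fun y : ℝ => 2*t*(1-t)*(((2-t)/3)*y + (1+t)/3))
      (2*t*(1-t)*((2-t)/3)) x := by
    have h := ((hid.const_mul ((2-t)/3)).add_const ((1+t)/3)).const_mul (2*t*(1-t))
    refine h.congr_deriv ?_
    ring
  have H := (hU1.add (hW.mul hr2)).sub_const (2*t*(1-t))
  unfold hh2 hh3
  refine H.congr_deriv ?_
  have e1 : x ^ (t-2) = x ^ (t-3) * x := by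
    rw [← Real.rpow_add_one hx.ne']
    congr 1
    ring
  rw [e1]
  ring

lemma hh_one (t : ℝ) : hh t 1 = 0 := by simp [hh]
lemma hh1_one (t : ℝ) : hh1 t 1 = 0 := by simp [hh1]
lemma hh2_one (t : ℝ) : hh2 t 1 = 0 := by simp [hh2]; ring

/-- If f has nonneg derivative on (0,∞) and f 1 = 0, then f ≤ 0 before 1, ≥ 0 after. -/
lemma mono_sign (f f' : ℝ → ℝ)
    (hd : ∀ x ∈ Set.Ioi (0:ℝ), HasDerivAt f (f' x) x)
    (hpos : ∀ x ∈ Set.Ioi (0:ℝ), 0 ≤ f' x) (hf1 : f 1 = 0) :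
    (∀ x, 0 < x → x ≤ 1 → f x ≤ 0) ∧ (∀ x, 1 ≤ x → 0 ≤ f x) := by
  constructor
  · intro x hx hx1
    have hsub : Set.Icc x 1 ⊆ Set.Ioi 0 := fun y hy => lt_of_lt_of_le hx hy.1
    have mono : MonotoneOn f (Set.Icc x 1) := by
      apply monotoneOn_of_deriv_nonneg (convex_Icc _ _)
      · exact fun y hy => (hd y (hsub hy)).continuousAt.continuousWithinAt
      · intro y hy
        rw [interior_Icc] at hy
        exact (hd y (hsub (Set.Ioo_subset_Icc_self hy))).differentiableAt.differentiableWithinAt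
      · intro y hy
        rw [interior_Icc] at hy
        rw [(hd y (hsub (Set.Ioo_subset_Icc_self hy))).deriv]
        exact hpos y (hsub (Set.Ioo_subset_Icc_self hy))
    have h2 := mono ⟨le_refl x, hx1⟩ ⟨hx1, le_refl 1⟩ hx1
    rw [hf1] at h2
    exact h2
  · intro x hx1
    have hsub : Set.Icc 1 x ⊆ Set.Ioi 0 := fun y hy => lt_of_lt_of_le one_pos hy.1
    have mono : MonotoneOn f (Set.Icc 1 x) := by
      apply monotoneOn_of_deriv_nonneg (convex_Icc _ _)
      · exact fun y hy => (hd y (hsub hy)).continuousAt.continuousWithinAt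
      · intro y hy
        rw [interior_Icc] at hy
        exact (hd y (hsub (Set.Ioo_subset_Icc_self hy))).differentiableAt.differentiableWithinAt
      · intro y hy
        rw [interior_Icc] at hy
        rw [(hd y (hsub (Set.Ioo_subset_Icc_self hy))).deriv]
        exact hpos y (hsub (Set.Ioo_subset_Icc_self hy))
    have h2 := mono ⟨le_refl 1, hx1⟩ ⟨hx1, le_refl x⟩ hx1
    rw [hf1] at h2
    exact h2

/-- V-shape: derivative ≤ 0 before 1, ≥ 0 after, f 1 = 0 implies f ≥ 0 on (0,∞). -/
lemma vshape (f f' : ℝ → ℝ)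
    (hd : ∀ x ∈ Set.Ioi (0:ℝ), HasDerivAt f (f' x) x)
    (hneg : ∀ x, 0 < x → x ≤ 1 → f' x ≤ 0)
    (hpos : ∀ x, 1 ≤ x → 0 ≤ f' x) (hf1 : f 1 = 0) :
    ∀ x > 0, 0 ≤ f x := by
  intro x hx
  rcases le_or_gt x 1 with h | h
  · have hsub : Set.Icc x 1 ⊆ Set.Ioi 0 := fun y hy => lt_of_lt_of_le hx hy.1
    have anti : AntitoneOn f (Set.Icc x 1) := by
      apply antitoneOn_of_deriv_nonpos (convex_Icc _ _)
      · exact fun y hy => (hd y (hsub hy)).continuousAt.continuousWithinAt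
      · intro y hy
        rw [interior_Icc] at hy
        exact (hd y (hsub (Set.Ioo_subset_Icc_self hy))).differentiableAt.differentiableWithinAt
      · intro y hy
        rw [interior_Icc] at hy
        rw [(hd y (hsub (Set.Ioo_subset_Icc_self hy))).deriv]
        exact hneg y (hsub (Set.Ioo_subset_Icc_self hy)) hy.2.le
    have h2 := anti ⟨le_refl x, h⟩ ⟨h, le_refl 1⟩ h
    rw [hf1] at h2
    exact h2
  · have hsub : Set.Icc 1 x ⊆ Set.Ioi 0 := fun y hy => lt_of_lt_of_le one_pos hy.1
    have mono : MonotoneOn f (Set.Icc 1 x) := by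
      apply monotoneOn_of_deriv_nonneg (convex_Icc _ _)
      · exact fun y hy => (hd y (hsub hy)).continuousAt.continuousWithinAt
      · intro y hy
        rw [interior_Icc] at hy
        exact (hd y (hsub (Set.Ioo_subset_Icc_self hy))).differentiableAt.differentiableWithinAt
      · intro y hy
        rw [interior_Icc] at hy
        rw [(hd y (hsub (Set.Ioo_subset_Icc_self hy))).deriv]
        exact hpos y hy.1.le
    have h2 := mono ⟨le_refl 1, h.le⟩ ⟨h.le, le_refl x⟩ h.le
    rw [hf1] at h2
    exact h2

lemma hh_nonneg {t : ℝ} (ht0 : 0 < t) (ht1 : t < 1) : ∀ x > 0, 0 ≤ hh t x := by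
  have hC : (0:ℝ) < 2*t*(1-t)*((2-t)*(1+t)/3) := by
    apply mul_pos (mul_pos (mul_pos (by norm_num) ht0) (by linarith))
    apply div_pos (mul_pos (by linarith) (by linarith)) (by norm_num)
  have h2nn : ∀ x > (0:ℝ), 0 ≤ hh2 t x := by
    apply vshape _ (hh3 t) (fun x hx => hd_hh2 t hx)
    · intro x hx hx1
      have h2 : (0:ℝ) < x ^ (t-3) := Real.rpow_pos_of_pos hx _
      show 2*t*(1-t)*((2-t)*(1+t)/3)*x ^ (t-3)*(x-1) ≤ 0
      exact mul_nonpos_iff.mpr (Or.inl ⟨(mul_pos hC h2).le, by linarith⟩)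
    · intro x hx1
      have h2 : (0:ℝ) < x ^ (t-3) := Real.rpow_pos_of_pos (by linarith) _
      show 0 ≤ 2*t*(1-t)*((2-t)*(1+t)/3)*x ^ (t-3)*(x-1)
      exact mul_nonneg (mul_pos hC h2).le (by linarith)
    · exact hh2_one t
  obtain ⟨h1neg, h1pos⟩ := mono_sign (hh1 t) (hh2 t) (fun x hx => hd_hh1 t hx)
    (fun x hx => h2nn x hx) (hh1_one t)
  exact vshape _ (hh1 t) (fun x hx => hd_hh t hx) h1neg h1pos (hh_one t)

theorem F_nonneg
    (p q : ℝ) (hp : 1 < p) (hq : 1 < q) (hpq : 1/p + 1/q = 1)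
    (A B : ℝ) (hA : A = (2 - 1/p)/3) (hB : B = (1 + 1/p)/3)
    (F : ℝ → ℝ)
    (hF : ∀ x > 0, F x = 2*p*q*(A*x + B)*(x/p + 1/q - x ^ (1/p)) - (x - 1)^2) :
    ∀ x > 0, F x ≥ 0 := by
  intro x hx
  have hp0 : (0:ℝ) < p := by linarith
  have hq0 : (0:ℝ) < q := by linarith
  have hp0' : p ≠ 0 := ne_of_gt hp0
  have hq0' : q ≠ 0 := ne_of_gt hq0
  have hp1 : p - 1 ≠ 0 := by intro h; rw [sub_eq_zero] at h; linarith
  have ht0 : 0 < 1/p := by positivity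
  have ht1 : 1/p < 1 := by rw [div_lt_one hp0]; linarith
  have hq1 : 1/q = 1 - 1/p := by linarith
  have h' : p + q = p*q := by
    field_simp at hpq
    linarith
  have hqv : q = p/(p-1) := by
    rw [eq_div_iff hp1]
    linear_combination -h'
  have key : F x = p * q * hh (1/p) x := by
    rw [hF x hx, hA, hB, hq1, hqv]
    simp only [hh]
    field_simp
  rw [key]
  have hnn := hh_nonneg ht0 ht1 x hx
  positivity
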